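/- Let q > 1, with unbounded digits allowed. Denote by (α_i) and (β_i) the quasi-greedy and greedy expansions of 1 in base q. If (β_i) has a last nonzero element β_m, then (α_i) is periodic with smallest period β_1 ... β_{m−1} (β_m − 1), i.e., (α_i) = (β_1 ... β_{m−1} (β_m − 1))^∞ and no proper divisor of m is a period. Otherwise (β_i) = (α_i), and in this case the sequence is not periodic. -/
import Mathlib


/-- The next quasi-greedy digit with unbounded digits: the largest nonnegative integer `m`
with `s + m / q ^ (n+1) < x`, where `s` is the value of the previously chosen digits. -/
noncomputable def qgDigitU (q x s : ℝ) (n : ℕ) : ℕ :=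
  sSup {m : ℕ | s + (m : ℝ) / q ^ (n + 1) < x}

/-- Partial sums of the quasi-greedy expansion of `x` in base `q` with unbounded digits. -/
noncomputable def qgSumU (q x : ℝ) : ℕ → ℝ
  | 0 => 0
  | n + 1 => qgSumU q x n + (qgDigitU q x (qgSumU q x n) n : ℝ) / q ^ (n + 1)

/-- `quasiGreedyU q x n` is the `(n+1)`-st digit (indexing from 0) of the quasi-greedy
expansion of `x` in base `q` with unbounded digits: recursively, it is the largest
nonnegative integer `a_n` with `a_1/q + ⋯ + a_n/q^n < x`. -/
noncomputable def quasiGreedyU (q x : ℝ) (n : ℕ) : ℕ :=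
  qgDigitU q x (qgSumU q x n) n

/-- The next greedy digit with unbounded digits: the largest nonnegative integer `m`
with `s + m / q ^ (n+1) ≤ x`, where `s` is the value of the previously chosen digits. -/
noncomputable def gDigitU (q x s : ℝ) (n : ℕ) : ℕ :=
  sSup {m : ℕ | s + (m : ℝ) / q ^ (n + 1) ≤ x}

/-- Partial sums of the greedy expansion of `x` in base `q` with unbounded digits. -/
noncomputable def gSumU (q x : ℝ) : ℕ → ℝ
  | 0 => 0
  | n + 1 => gSumU q x n + (gDigitU q x (gSumU q x n) n : ℝ) / q ^ (n + 1)

/-- `greedyU q x n` is the `(n+1)`-st digit (indexing from 0) of the greedy expansion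
of `x` in base `q` with unbounded digits: recursively, it is the largest nonnegative
integer `b_n` with `b_1/q + ⋯ + b_n/q^n ≤ x`. -/
noncomputable def greedyU (q x : ℝ) (n : ℕ) : ℕ :=
  gDigitU q x (gSumU q x n) n

namespace QGU

/-- Scaled quasi-greedy remainder. -/
noncomputable def X (q : ℝ) (n : ℕ) : ℝ := q ^ n * (1 - qgSumU q 1 n)

/-- Scaled greedy remainder. -/
noncomputable def Y (q : ℝ) (n : ℕ) : ℝ := q ^ n * (1 - gSumU q 1 n)

variable {q : ℝ}

lemma natSup_lt {t : ℝ} (ht : 0 < t) :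
    ((sSup {m : ℕ | (m : ℝ) < t} : ℕ) : ℝ) < t ∧
      t ≤ (sSup {m : ℕ | (m : ℝ) < t} : ℕ) + 1 := by
  have hbdd : BddAbove {m : ℕ | (m : ℝ) < t} := by
    refine ⟨Nat.ceil t, fun m hm => ?_⟩
    exact_mod_cast le_trans (le_of_lt hm) (Nat.le_ceil t)
  have hmem : sSup {m : ℕ | (m : ℝ) < t} ∈ {m : ℕ | (m : ℝ) < t} :=
    Nat.sSup_mem ⟨0, by simpa using ht⟩ hbdd
  refine ⟨hmem, ?_⟩
  by_contra h
  push_neg at h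
  have hmem2 : sSup {m : ℕ | (m : ℝ) < t} + 1 ∈ {m : ℕ | (m : ℝ) < t} := by
    simpa using h
  have := le_csSup hbdd hmem2
  omega

lemma natSup_le {t : ℝ} (ht : 0 ≤ t) :
    ((sSup {m : ℕ | (m : ℝ) ≤ t} : ℕ) : ℝ) ≤ t ∧
      t < (sSup {m : ℕ | (m : ℝ) ≤ t} : ℕ) + 1 := by
  have hbdd : BddAbove {m : ℕ | (m : ℝ) ≤ t} := by
    refine ⟨Nat.ceil t, fun m hm => ?_⟩
    exact_mod_cast le_trans hm (Nat.le_ceil t)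
  have hmem : sSup {m : ℕ | (m : ℝ) ≤ t} ∈ {m : ℕ | (m : ℝ) ≤ t} :=
    Nat.sSup_mem ⟨0, by simpa using ht⟩ hbdd
  refine ⟨hmem, ?_⟩
  by_contra h
  push_neg at h
  have hmem2 : sSup {m : ℕ | (m : ℝ) ≤ t} + 1 ∈ {m : ℕ | (m : ℝ) ≤ t} := by
    simpa using h
  have := le_csSup hbdd hmem2
  omega

lemma quasi_digit_eq (hq : 1 < q) (n : ℕ) :
    quasiGreedyU q 1 n = sSup {m : ℕ | (m : ℝ) < q * X q n} := by
  have hqpos : (0:ℝ) < q ^ (n+1) := pow_pos (by linarith) _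
  unfold quasiGreedyU qgDigitU X
  congr 1
  ext m
  simp only [Set.mem_setOf_eq]
  rw [show q * (q ^ n * (1 - qgSumU q 1 n)) = (1 - qgSumU q 1 n) * q ^ (n+1) by ring,
      ← div_lt_iff₀ hqpos]
  constructor <;> intro h <;> linarith

lemma greedy_digit_eq (hq : 1 < q) (n : ℕ) :
    greedyU q 1 n = sSup {m : ℕ | (m : ℝ) ≤ q * Y q n} := by
  have hqpos : (0:ℝ) < q ^ (n+1) := pow_pos (by linarith) _
  unfold greedyU gDigitU Y
  congr 1
  ext m
  simp only [Set.mem_setOf_eq]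
  rw [show q * (q ^ n * (1 - gSumU q 1 n)) = (1 - gSumU q 1 n) * q ^ (n+1) by ring,
      ← div_le_iff₀ hqpos]
  constructor <;> intro h <;> linarith

lemma X_zero : X q 0 = 1 := by simp [X, qgSumU]

lemma Y_zero : Y q 0 = 1 := by simp [Y, gSumU]

lemma X_succ (hq : 1 < q) (n : ℕ) :
    X q (n+1) = q * X q n - quasiGreedyU q 1 n := by
  have h0 : (q:ℝ) ^ (n+1) ≠ 0 := by positivity
  have hrec : qgSumU q 1 (n+1)
      = qgSumU q 1 n + (quasiGreedyU q 1 n : ℝ) / q ^ (n+1) := rfl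
  unfold X
  rw [hrec]
  field_simp
  ring

lemma Y_succ (hq : 1 < q) (n : ℕ) :
    Y q (n+1) = q * Y q n - greedyU q 1 n := by
  have h0 : (q:ℝ) ^ (n+1) ≠ 0 := by positivity
  have hrec : gSumU q 1 (n+1)
      = gSumU q 1 n + (greedyU q 1 n : ℝ) / q ^ (n+1) := rfl
  unfold Y
  rw [hrec]
  field_simp
  ring

lemma X_pos_le (hq : 1 < q) : ∀ n, 0 < X q n ∧ X q n ≤ 1 := by
  intro n
  induction n with
  | zero => rw [X_zero]; norm_num
  | succ n ih =>
    have ht : 0 < q * X q n := mul_pos (by linarith) ih.1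
    have hd := natSup_lt ht
    rw [← quasi_digit_eq hq n] at hd
    rw [X_succ hq n]
    constructor <;> linarith [hd.1, hd.2]

lemma quasi_digit (hq : 1 < q) (n : ℕ) :
    (quasiGreedyU q 1 n : ℝ) < q * X q n ∧ q * X q n ≤ quasiGreedyU q 1 n + 1 := by
  have ht : 0 < q * X q n := mul_pos (by linarith) (X_pos_le hq n).1
  have hd := natSup_lt ht
  rwa [← quasi_digit_eq hq n] at hd

lemma Y_nonneg_le (hq : 1 < q) : ∀ n, 0 ≤ Y q n ∧ Y q n ≤ 1 := by
  intro n
  induction n with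
  | zero => rw [Y_zero]; norm_num
  | succ n ih =>
    have ht : 0 ≤ q * Y q n := mul_nonneg (by linarith) ih.1
    have hd := natSup_le ht
    rw [← greedy_digit_eq hq n] at hd
    rw [Y_succ hq n]
    constructor <;> linarith [hd.1, hd.2]

lemma greedy_digit (hq : 1 < q) (n : ℕ) :
    (greedyU q 1 n : ℝ) ≤ q * Y q n ∧ q * Y q n < greedyU q 1 n + 1 := by
  have ht : 0 ≤ q * Y q n := mul_nonneg (by linarith) (Y_nonneg_le hq n).1
  have hd := natSup_le ht
  rwa [← greedy_digit_eq hq n] at hd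

lemma alpha_congr (hq : 1 < q) {n n' : ℕ} (h : X q n = X q n') :
    quasiGreedyU q 1 n = quasiGreedyU q 1 n' := by
  rw [quasi_digit_eq hq, quasi_digit_eq hq, h]

lemma Y_eq_zero (hq : 1 < q) {n : ℕ} (h : Y q n = 0) :
    greedyU q 1 n = 0 ∧ Y q (n+1) = 0 := by
  have hd := greedy_digit hq n
  rw [h] at hd
  have hb : greedyU q 1 n = 0 := by
    have : (greedyU q 1 n : ℝ) ≤ 0 := by linarith [hd.1]
    exact_mod_cast le_antisymm (by exact_mod_cast this) (Nat.zero_le _)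
  refine ⟨hb, ?_⟩
  rw [Y_succ hq, h, hb]
  simp

lemma Y_zero_tail (hq : 1 < q) {n : ℕ} (h : Y q n = 0) :
    ∀ k, Y q (n + k) = 0 ∧ greedyU q 1 (n + k) = 0 := by
  intro k
  induction k with
  | zero => exact ⟨h, (Y_eq_zero hq h).1⟩
  | succ k ih =>
    have h2 := Y_eq_zero hq ih.1
    rw [show n + (k+1) = (n + k) + 1 by ring]
    exact ⟨h2.2, (Y_eq_zero hq h2.2).1⟩

lemma tail_zero_Y (hq : 1 < q) {m : ℕ} (h : ∀ i, m < i → greedyU q 1 i = 0) :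
    Y q (m+1) = 0 := by
  by_contra h0
  have hpos : 0 < Y q (m+1) := (Y_nonneg_le hq (m+1)).1.lt_of_ne (Ne.symm h0)
  have hgrow : ∀ k, Y q (m+1+k) = q ^ k * Y q (m+1) := by
    intro k
    induction k with
    | zero => simp
    | succ k ih =>
      rw [show m+1+(k+1) = (m+1+k)+1 by ring, Y_succ hq, h _ (by omega), ih]
      push_cast
      ring
  obtain ⟨k, hk⟩ := pow_unbounded_of_one_lt (1 / Y q (m+1)) hq
  have hle := (Y_nonneg_le hq (m+1+k)).2
  rw [hgrow k] at hle
  have h1 : 1 < q ^ k * Y q (m+1) := by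
    rw [div_lt_iff₀ hpos] at hk
    linarith
  linarith

lemma agree (hq : 1 < q) {n : ℕ} (hXY : X q n = Y q n) (hYpos : 0 < Y q n)
    (hY1 : Y q (n+1) ≠ 0) :
    quasiGreedyU q 1 n = greedyU q 1 n ∧ X q (n+1) = Y q (n+1) := by
  have hd1 := quasi_digit hq n
  have hd2 := greedy_digit hq n
  have hY1' : 0 < Y q (n+1) := (Y_nonneg_le hq (n+1)).1.lt_of_ne (Ne.symm hY1)
  rw [Y_succ hq] at hY1'
  rw [hXY] at hd1
  have h1 : (quasiGreedyU q 1 n : ℝ) < (greedyU q 1 n : ℝ) + 1 := by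
    linarith [hd1.1, hd2.2]
  have h2 : (greedyU q 1 n : ℝ) < (quasiGreedyU q 1 n : ℝ) + 1 := by
    linarith [hd1.2]
  have h1' : quasiGreedyU q 1 n < greedyU q 1 n + 1 := by exact_mod_cast h1
  have h2' : greedyU q 1 n < quasiGreedyU q 1 n + 1 := by exact_mod_cast h2
  have hab : quasiGreedyU q 1 n = greedyU q 1 n := by omega
  refine ⟨hab, ?_⟩
  rw [X_succ hq, Y_succ hq, hXY, hab]

lemma period_X_eq_one (hq : 1 < q) {p : ℕ}
    (hper : ∀ i, quasiGreedyU q 1 (i + p) = quasiGreedyU q 1 i) : X q p = 1 := by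
  have key : ∀ n, X q (n + p) - X q n = q ^ n * (X q p - X q 0) := by
    intro n
    induction n with
    | zero => simp
    | succ n ih =>
      rw [show n + 1 + p = (n + p) + 1 by ring, X_succ hq, X_succ hq, hper n]
      linear_combination q * ih
  rw [← X_zero (q := q)]
  by_contra hne
  have habs : 0 < |X q p - X q 0| := abs_pos.mpr (sub_ne_zero.mpr hne)
  obtain ⟨n, hn⟩ := pow_unbounded_of_one_lt (1 / |X q p - X q 0|) hq
  have h1 := X_pos_le hq (n + p)
  have h2 := X_pos_le hq n
  have hlt : |X q (n+p) - X q n| < 1 :=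
    abs_lt.mpr ⟨by linarith [h1.1, h2.2], by linarith [h1.2, h2.1]⟩
  rw [key n, abs_mul, abs_pow, abs_of_pos (by linarith : (0:ℝ) < q)] at hlt
  rw [div_lt_iff₀ habs] at hn
  linarith

lemma hit_contra (hq : 1 < q) {p : ℕ} (hXp : X q (p+1) = 1)
    (hXY : X q p = Y q p) (hab : quasiGreedyU q 1 p = greedyU q 1 p) : False := by
  have h1 := quasi_digit hq p
  have h2 := greedy_digit hq p
  rw [X_succ hq, hXY, hab] at hXp
  rw [hXY, hab] at h1
  linarith [h2.2, hXp]

lemma period_mod {f : ℕ → ℕ} {T : ℕ} (hT : 0 < T)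
    (hper : ∀ n, f (n + T) = f n) : ∀ i, f i = f (i % T) := by
  intro i
  induction i using Nat.strong_induction_on with
  | _ i ih =>
    by_cases h : i < T
    · rw [Nat.mod_eq_of_lt h]
    · push_neg at h
      have heq : i = (i - T) + T := by omega
      have hmod : i % T = (i - T) % T := by
        conv_lhs => rw [heq]
        exact Nat.add_mod_right _ _
      rw [heq, hper, ih _ (by omega), Nat.add_mod_right]

end QGU

/-- Proposition 3.7 (b): with unbounded digits, if the greedy expansion `(β_i)` of `1` has
a last nonzero element `β_m`, then the quasi-greedy expansion `(α_i)` of `1` is periodic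
with smallest period `β_1 … β_{m-1} (β_m - 1)`; otherwise `(β_i) = (α_i)` and this
sequence is not periodic. -/
theorem quasiGreedyU_one_eq_of_greedyU_one (q : ℝ) (hq : 1 < q) :
    (∀ m : ℕ, 1 ≤ greedyU q 1 m → (∀ i, m < i → greedyU q 1 i = 0) →
      ((∀ i, quasiGreedyU q 1 i =
          if i % (m + 1) = m then greedyU q 1 m - 1 else greedyU q 1 (i % (m + 1))) ∧
        ∀ p, 0 < p → (∀ i, quasiGreedyU q 1 (i + p) = quasiGreedyU q 1 i) →
          m + 1 ≤ p)) ∧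
    ({n | greedyU q 1 n ≠ 0}.Infinite →
      greedyU q 1 = quasiGreedyU q 1 ∧
      ¬ ∃ p, 0 < p ∧ ∀ i, quasiGreedyU q 1 (i + p) = quasiGreedyU q 1 i) := by

  constructor
  · intro m hm hz
    have hY0 : QGU.Y q (m+1) = 0 := QGU.tail_zero_Y hq hz
    have hYpos : ∀ i, i ≤ m → 0 < QGU.Y q i := by
      intro i hi
      rcases ((QGU.Y_nonneg_le hq i).1).lt_or_eq with h | h
      · exact h
      · exfalso
        have hb := (QGU.Y_zero_tail hq h.symm (m - i)).2
        rw [show i + (m - i) = m by omega] at hb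
        omega
    have hXYle : ∀ i, i ≤ m → QGU.X q i = QGU.Y q i := by
      intro i
      induction i with
      | zero => intro _; rw [QGU.X_zero, QGU.Y_zero]
      | succ i ih =>
        intro hi
        exact (QGU.agree hq (ih (by omega)) (hYpos i (by omega))
          (hYpos (i+1) hi).ne').2
    have hab : ∀ i, i < m → quasiGreedyU q 1 i = greedyU q 1 i := fun i hi =>
      (QGU.agree hq (hXYle i hi.le) (hYpos i hi.le) (hYpos (i+1) hi).ne').1
    have hstep := QGU.Y_succ hq m
    rw [hY0] at hstep
    have hqYm : q * QGU.Y q m = greedyU q 1 m := by linarith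
    have hαm1 : quasiGreedyU q 1 m + 1 = greedyU q 1 m := by
      have hd := QGU.quasi_digit hq m
      rw [hXYle m le_rfl] at hd
      have h1 : (quasiGreedyU q 1 m : ℝ) < (greedyU q 1 m : ℝ) := by
        rw [← hqYm]; exact hd.1
      have h2 : (greedyU q 1 m : ℝ) ≤ (quasiGreedyU q 1 m : ℝ) + 1 := by
        rw [← hqYm]; exact hd.2
      have h1' : quasiGreedyU q 1 m < greedyU q 1 m := by exact_mod_cast h1
      have h2' : greedyU q 1 m ≤ quasiGreedyU q 1 m + 1 := by exact_mod_cast h2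
      omega
    have hXm1 : QGU.X q (m+1) = 1 := by
      have hcast : (quasiGreedyU q 1 m : ℝ) + 1 = greedyU q 1 m := by
        exact_mod_cast hαm1
      rw [QGU.X_succ hq, hXYle m le_rfl]
      linarith
    have hperX : ∀ n, QGU.X q (n + (m+1)) = QGU.X q n := by
      intro n
      induction n with
      | zero => rw [Nat.zero_add, hXm1, QGU.X_zero]
      | succ n ih =>
        rw [show n + 1 + (m+1) = (n + (m+1)) + 1 by ring, QGU.X_succ hq,
          QGU.X_succ hq, ih, QGU.alpha_congr hq ih]
    have hperα : ∀ n, quasiGreedyU q 1 (n + (m+1)) = quasiGreedyU q 1 n :=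
      fun n => QGU.alpha_congr hq (hperX n)
    constructor
    · intro i
      have hmod := QGU.period_mod (show 0 < m + 1 by omega) hperα i
      have hj : i % (m+1) < m + 1 := Nat.mod_lt _ (Nat.succ_pos m)
      by_cases hjm : i % (m+1) = m
      · rw [if_pos hjm, hmod, hjm]
        omega
      · rw [if_neg hjm, hmod]
        exact hab _ (by omega)
    · intro p hp hper
      by_contra hlt
      push_neg at hlt
      obtain ⟨p', rfl⟩ : ∃ p', p = p' + 1 := ⟨p - 1, by omega⟩
      exact QGU.hit_contra hq (QGU.period_X_eq_one hq hper)
        (hXYle p' (by omega)) (hab p' (by omega))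
  · intro hinf
    have hYne : ∀ n, QGU.Y q n ≠ 0 := by
      intro n h
      refine hinf ((Set.finite_Iio n).subset ?_)
      intro i hi
      simp only [Set.mem_Iio]
      by_contra hni
      push_neg at hni
      apply hi
      have hb := (QGU.Y_zero_tail hq h (i - n)).2
      rwa [show n + (i - n) = i by omega] at hb
    have hXY : ∀ n, QGU.X q n = QGU.Y q n := by
      intro n
      induction n with
      | zero => rw [QGU.X_zero, QGU.Y_zero]
      | succ n ih =>
        exact (QGU.agree hq ih
          ((QGU.Y_nonneg_le hq n).1.lt_of_ne (Ne.symm (hYne n))) (hYne (n+1))).2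
    have hab : ∀ n, quasiGreedyU q 1 n = greedyU q 1 n := fun n =>
      (QGU.agree hq (hXY n)
        ((QGU.Y_nonneg_le hq n).1.lt_of_ne (Ne.symm (hYne n))) (hYne (n+1))).1
    refine ⟨funext fun n => (hab n).symm, ?_⟩
    rintro ⟨p, hp, hper⟩
    obtain ⟨p', rfl⟩ : ∃ p', p = p' + 1 := ⟨p - 1, by omega⟩
    exact QGU.hit_contra hq (QGU.period_X_eq_one hq hper) (hXY p') (hab p')
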